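/- Let u ∈ C⁴(D) with |u''''| ≤ C₁ on D. Then there is a constant C, depending only on C₁, M, and f'(0), such that for all x ∈ D whose ε-neighborhood lies in D: |(2/ε²)∫_{x-ε}^{x+ε} J(|y-x|/ε) f'(0) S(y,x;u) dy - 𝔽·u''(x)| ≤ C·ε². The improvement from O(ε) to O(ε²) comes from the vanishing of the odd third-order term in the symmetric integral. -/

import Mathlib

open MeasureTheory Set intervalIntegral

private lemma ladder {g g' : ℝ → ℝ} {a : ℝ} (ha : 0 ≤ a) (k : ℕ)
    (hd : ∀ t, HasDerivAt g (g' t) t) (hc : Continuous g') (h0 : g 0 = 0)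
    (hb : ∀ t, |g' t| ≤ a * |t| ^ k) : ∀ t, |g t| ≤ a * |t| ^ (k + 1) := by
  intro t
  have hftc : ∫ s in (0:ℝ)..t, g' s = g t - g 0 :=
    integral_eq_sub_of_hasDerivAt (fun s _ => hd s) (hc.intervalIntegrable _ _)
  have hbd : ∀ s ∈ Set.uIoc (0:ℝ) t, ‖g' s‖ ≤ a * |t| ^ k := by
    intro s hs
    have hst : |s| ≤ |t| := by
      rcases Set.mem_uIoc.1 hs with ⟨h1, h2⟩ | ⟨h1, h2⟩ <;>
        (rw [abs_le] ; constructor <;> nlinarith [le_abs_self t, neg_abs_le t])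
    calc ‖g' s‖ ≤ a * |s| ^ k := hb s
      _ ≤ a * |t| ^ k := by gcongr
  have h2 := intervalIntegral.norm_integral_le_of_norm_le_const hbd
  rw [hftc, h0, sub_zero, sub_zero] at h2
  calc |g t| ≤ a * |t| ^ k * |t| := h2
    _ = a * |t| ^ (k + 1) := by ring

private lemma taylor_sym {u : ℝ → ℝ} {C₁ : ℝ} (hu : ContDiff ℝ 4 u)
    (hC₁ : ∀ z, |iteratedDeriv 4 u z| ≤ C₁) (x y : ℝ) :
    |u y + u (2*x - y) - 2*u x - iteratedDeriv 2 u x * (y - x)^2| ≤ 2*C₁*(y-x)^4 := by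
  have hC₁0 : 0 ≤ C₁ := le_trans (abs_nonneg _) (hC₁ 0)
  have hdiff : ∀ n : ℕ, n < 4 → ∀ z, HasDerivAt (iteratedDeriv n u) (iteratedDeriv (n+1) u z) z := by
    intro n hn z
    have h1 : Differentiable ℝ (iteratedDeriv n u) :=
      hu.differentiable_iteratedDeriv n (by exact_mod_cast hn)
    have := (h1 z).hasDerivAt
    rwa [iteratedDeriv_succ]
  have hcont : ∀ n : ℕ, n ≤ 4 → Continuous (iteratedDeriv n u) := fun n hn =>
    hu.continuous_iteratedDeriv n (by exact_mod_cast hn)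
  set u1 := iteratedDeriv 1 u
  set u2 := iteratedDeriv 2 u
  set u3 := iteratedDeriv 3 u
  set u4 := iteratedDeriv 4 u
  have hu01 : ∀ z, HasDerivAt u (u1 z) z := by
    intro z; have := hdiff 0 (by norm_num) z; rwa [iteratedDeriv_zero] at this
  have hu12 : ∀ z, HasDerivAt u1 (u2 z) z := hdiff 1 (by norm_num)
  have hu23 : ∀ z, HasDerivAt u2 (u3 z) z := hdiff 2 (by norm_num)
  have hu34 : ∀ z, HasDerivAt u3 (u4 z) z := hdiff 3 (by norm_num)
  set c := u2 x with hc
  set w4 : ℝ → ℝ := fun t => u4 (x + t) + u4 (x - t) with hw4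
  set w3 : ℝ → ℝ := fun t => u3 (x + t) - u3 (x - t) with hw3
  set w2 : ℝ → ℝ := fun t => u2 (x + t) + u2 (x - t) - 2*c with hw2
  set w1 : ℝ → ℝ := fun t => u1 (x + t) - u1 (x - t) - 2*c*t with hw1
  set w0 : ℝ → ℝ := fun t => u (x + t) + u (x - t) - 2*u x - c*t^2 with hw0
  have hxp : ∀ (v v' : ℝ → ℝ), (∀ z, HasDerivAt v (v' z) z) →
      ∀ t, HasDerivAt (fun t => v (x + t)) (v' (x + t)) t := by
    intro v v' hv t
    exact ((hv (x + t)).comp t ((hasDerivAt_id t).const_add x)).congr_deriv (by ring)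
  have hxm : ∀ (v v' : ℝ → ℝ), (∀ z, HasDerivAt v (v' z) z) →
      ∀ t, HasDerivAt (fun t => v (x - t)) (-v' (x - t)) t := by
    intro v v' hv t
    have := (hv (x - t)).comp t ((hasDerivAt_id t).const_sub x)
    exact this.congr_deriv (by ring)
  have hcc : ∀ n : ℕ, n ≤ 4 → Continuous (fun t => iteratedDeriv n u (x + t)) ∧
      Continuous (fun t => iteratedDeriv n u (x - t)) := by
    intro n hn
    exact ⟨(hcont n hn).comp (continuous_const.add continuous_id),
      (hcont n hn).comp (continuous_const.sub continuous_id)⟩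
  have hw3d : ∀ t, HasDerivAt w3 (w4 t) t := by
    intro t
    have := ((hxp u3 u4 hu34 t).sub (hxm u3 u4 hu34 t))
    exact this.congr_deriv (by simp only [hw4]; ring)
  have hw2d : ∀ t, HasDerivAt w2 (w3 t) t := by
    intro t
    have := (((hxp u2 u3 hu23 t).add (hxm u2 u3 hu23 t)).sub_const (2*c))
    refine this.congr_deriv ?_
    simp only [hw3]; ring
  have hw1d : ∀ t, HasDerivAt w1 (w2 t) t := by
    intro t
    have h2 : HasDerivAt (fun t : ℝ => 2*c*t) (2*c) t := by
      simpa using (hasDerivAt_id t).const_mul (2*c)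
    have := ((hxp u1 u2 hu12 t).sub (hxm u1 u2 hu12 t)).sub h2
    refine this.congr_deriv ?_
    simp only [hw2]; ring
  have hw0d : ∀ t, HasDerivAt w0 (w1 t) t := by
    intro t
    have hsq : HasDerivAt (fun t : ℝ => c*t^2) (c*(2*t)) t := by
      simpa using (hasDerivAt_pow 2 t).const_mul c
    have := (((hxp u u1 hu01 t).add (hxm u u1 hu01 t)).sub_const (2*u x)).sub hsq
    refine this.congr_deriv ?_
    simp only [hw1]; ring
  have hb4 : ∀ t, |w4 t| ≤ 2*C₁ * |t|^0 := by
    intro t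
    simp only [pow_zero, mul_one, hw4]
    calc |u4 (x+t) + u4 (x-t)| ≤ |u4 (x+t)| + |u4 (x-t)| := abs_add_le _ _
      _ ≤ 2*C₁ := by have := hC₁ (x+t); have := hC₁ (x-t); simp only [u4] at *; linarith
  have ha : (0:ℝ) ≤ 2*C₁ := by linarith
  have hb3 : ∀ t, |w3 t| ≤ 2*C₁ * |t|^1 :=
    ladder ha 0 hw3d ((hcc 4 le_rfl).1.add (hcc 4 le_rfl).2)
      (by simp [hw3]) hb4
  have hb2 : ∀ t, |w2 t| ≤ 2*C₁ * |t|^2 :=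
    ladder ha 1 hw2d ((hcc 3 (by norm_num)).1.sub (hcc 3 (by norm_num)).2)
      (by simp [hw2, hc]; ring) hb3
  have hb1 : ∀ t, |w1 t| ≤ 2*C₁ * |t|^3 :=
    ladder ha 2 hw1d (((hcc 2 (by norm_num)).1.add (hcc 2 (by norm_num)).2).sub continuous_const)
      (by simp [hw1]) hb2
  have hb0 : ∀ t, |w0 t| ≤ 2*C₁ * |t|^4 := by
    refine ladder ha 3 hw0d ?_ (by simp only [hw0]; norm_num; ring) hb1
    have h1 : Continuous u1 := hcont 1 (by norm_num)
    exact (((h1.comp (continuous_const.add continuous_id)).sub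
      (h1.comp (continuous_const.sub continuous_id))).sub
      ((continuous_const.mul continuous_id)))
  have habs : |y - x| ^ 4 = (y - x)^4 := by
    rw [← abs_pow]; exact abs_of_nonneg (by positivity)
  have hxy : x + (y - x) = y := by ring
  have hxy2 : x - (y - x) = 2*x - y := by ring
  have hval : w0 (y-x) = u y + u (2*x - y) - 2*u x - u2 x * (y-x)^2 := by
    simp only [hw0]
    rw [hxy, hxy2]
  have hfin := hb0 (y - x)
  rw [habs, hval] at hfin
  exact hfin

/-- For `u ∈ C⁴` with `|u''''| ≤ C₁`, there is a constant `C` (depending only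
on `C₁`, `M`, `f'(0)`) such that for all `x` and all `ε > 0`, the linearized peridynamic
force is within `C ε²` of the local elastic force `𝔽 u''(x)`:
`|(2/ε²)∫_{x-ε}^{x+ε} J(|y-x|/ε) f'(0) S(y,x;u) dy - 𝔽 u''(x)| ≤ C ε²`,
where `𝔽 = ∫_{-1}^1 J(|z|) f'(0) |z| dz` and `S(y,x;u) = (u y - u x)/|y-x|`. -/
theorem stmt_6 (u J : ℝ → ℝ) (C₁ M f'0 : ℝ) (hf'0 : 0 < f'0)
    (hu : ContDiff ℝ 4 u)
    (hC₁ : ∀ z, |iteratedDeriv 4 u z| ≤ C₁)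
    (hJ0 : ∀ r, 0 ≤ J r) (hJM : ∀ r, J r ≤ M)
    (hJsupp : ∀ r, r ∉ Set.Icc (0 : ℝ) 1 → J r = 0) :
    ∃ C > 0, ∀ (x : ℝ), ∀ ε > 0,
      abs ((2 / ε ^ 2) * (∫ y in (x - ε)..(x + ε),
            J (|y - x| / ε) * f'0 * ((u y - u x) / |y - x|))
          - (∫ z in (-1 : ℝ)..1, J |z| * f'0 * |z|) * deriv (deriv u) x) ≤ C * ε ^ 2 := by
  have hM0 : (0:ℝ) ≤ M := le_trans (hJ0 0) (hJM 0)
  have hC₁0 : (0:ℝ) ≤ C₁ := le_trans (abs_nonneg _) (hC₁ 0)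
  refine ⟨8 * M * f'0 * C₁ + 1, by positivity, ?_⟩
  intro x ε hε
  have hε2 : (0:ℝ) < ε ^ 2 := by positivity
  set c : ℝ := deriv (deriv u) x with hcdef
  have hc2 : c = iteratedDeriv 2 u x := by
    rw [hcdef, iteratedDeriv_succ, iteratedDeriv_one]
  set F : ℝ → ℝ := fun y => J (|y - x| / ε) * f'0 * ((u y - u x) / |y - x|) with hF
  set Φ : ℝ → ℝ := fun y => J (|y - x| / ε) * f'0 * |y - x| with hΦ
  set Hf : ℝ → ℝ := fun y => u y + u (2*x - y) - 2*u x with hHf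
  set Fq : ℝ := ∫ z in (-1:ℝ)..1, J |z| * f'0 * |z| with hFq
  have hTay : ∀ y : ℝ, |Hf y - c * (y-x)^2| ≤ 2*C₁*(y-x)^4 := by
    intro y
    simp only [hHf]
    rw [hc2]
    exact taylor_sym hu hC₁ x y
  have hFrefl : ∀ y : ℝ, F (2*x - y) = J (|y - x| / ε) * f'0 * ((u (2*x - y) - u x) / |y - x|) := by
    intro y
    simp only [hF]
    rw [show 2*x - y - x = -(y - x) by ring, abs_neg]
  have hG : ∀ y : ℝ, F y + F (2*x - y) = J (|y - x| / ε) * f'0 * (Hf y / |y - x|) := by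
    intro y
    rw [hFrefl y]
    simp only [hF, hHf]
    by_cases hy : y = x
    · subst hy; simp
    · have h0 : |y - x| ≠ 0 := abs_ne_zero.2 (sub_ne_zero.2 hy)
      field_simp
      try ring
  have he2 : ∀ y : ℝ, (y-x)^2 = |y-x|^2 := fun y => (sq_abs _).symm
  have he4 : ∀ y : ℝ, (y-x)^4 = |y-x|^4 := by
    intro y
    rw [pow_abs, abs_of_nonneg (by positivity)]
  have hdiv : ∀ y : ℝ, y ≠ x → ∀ a : ℝ, a / (y-x)^2 * |y-x| = a / |y-x| := by
    intro y hy a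
    have h0 : |y-x| ≠ 0 := abs_ne_zero.2 (sub_ne_zero.2 hy)
    have hq2 : (y-x)^2 ≠ 0 := pow_ne_zero 2 (sub_ne_zero.2 hy)
    rw [div_mul_eq_mul_div, div_eq_div_iff hq2 h0, he2 y]
    ring
  have hGbd : ∀ y : ℝ, |F y + F (2*x - y)| ≤ M * f'0 * (|c| * |y-x| + 2*C₁*|y-x|^3) := by
    intro y
    rw [hG y]
    by_cases hy : y = x
    · subst hy
      simp only [hHf]
      norm_num
    · have h0 : (0:ℝ) < |y - x| := abs_pos.2 (sub_ne_zero.2 hy)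
      have hH : |Hf y| ≤ |c| * (y-x)^2 + 2*C₁*(y-x)^4 := by
        have h1 := hTay y
        have h2 := abs_add_le (Hf y - c*(y-x)^2) (c*(y-x)^2)
        rw [sub_add_cancel] at h2
        have h3 : |c*(y-x)^2| = |c| * (y-x)^2 := by rw [abs_mul, abs_pow, sq_abs]
        rw [h3] at h2
        linarith
      calc |J (|y - x| / ε) * f'0 * (Hf y / |y - x|)|
          = J (|y - x| / ε) * f'0 * (|Hf y| / |y - x|) := by
            rw [abs_mul, abs_mul, abs_div, abs_abs, abs_of_nonneg (hJ0 _),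
              abs_of_nonneg hf'0.le]
        _ ≤ M * f'0 * ((|c| * (y-x)^2 + 2*C₁*(y-x)^4) / |y - x|) := by
            gcongr
            · exact hJM _
        _ = M * f'0 * (|c| * |y-x| + 2*C₁*|y-x|^3) := by
            have hq : (|c| * (y-x)^2 + 2*C₁*(y-x)^4) / |y-x| = |c| * |y-x| + 2*C₁*|y-x|^3 := by
              rw [he2 y, he4 y, div_eq_iff h0.ne']
              ring
            rw [hq]
  have hPhiW : ∀ y : ℝ, Φ y = ε * ((fun z => J |z| * f'0 * |z|) (y/ε - x/ε)) := by
    intro y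
    have h1 : y/ε - x/ε = (y - x)/ε := by ring
    simp only [hΦ]
    rw [h1, abs_div, abs_of_pos hε]
    field_simp
  have hscale : (∫ y in (x-ε)..(x+ε), Φ y) = ε^2 * Fq := by
    have e1 : (x-ε)/ε - x/ε = -1 := by field_simp; ring
    have e2 : (x+ε)/ε - x/ε = 1 := by field_simp; ring
    have key := intervalIntegral.integral_comp_div_sub (a := x-ε) (b := x+ε)
      (fun z => J |z| * f'0 * |z|) (ne_of_gt hε) (x/ε)
    rw [e1, e2] at key
    calc (∫ y in (x-ε)..(x+ε), Φ y)
        = ∫ y in (x-ε)..(x+ε), ε * ((fun z => J |z| * f'0 * |z|) (y/ε - x/ε)) :=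
          intervalIntegral.integral_congr (fun y _ => hPhiW y)
      _ = ε * ∫ y in (x-ε)..(x+ε), (fun z => J |z| * f'0 * |z|) (y/ε - x/ε) :=
          intervalIntegral.integral_const_mul _ _
      _ = ε * (ε • ∫ z in (-1:ℝ)..1, J |z| * f'0 * |z|) := by rw [key]
      _ = ε^2 * Fq := by rw [smul_eq_mul, hFq]; ring
  have hrefl : (∫ y in (x-ε)..(x+ε), F (2*x - y)) = ∫ y in (x-ε)..(x+ε), F y := by
    have key := intervalIntegral.integral_comp_sub_left (a := x-ε) (b := x+ε) F (2*x)
    rw [show 2*x - (x+ε) = x - ε by ring, show 2*x - (x-ε) = x + ε by ring] at key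
    exact key
  have hIoc : Set.uIoc (x-ε) (x+ε) = Set.Ioc (x-ε) (x+ε) := Set.uIoc_of_le (by linarith)
  have hmemI : ∀ y ∈ Set.uIoc (x-ε) (x+ε), |y - x| ≤ ε := by
    intro y hy
    rw [hIoc] at hy
    rw [abs_le]
    exact ⟨by linarith [hy.1], by linarith [hy.2]⟩
  have hii : ∀ (f : ℝ → ℝ) (Cb : ℝ),
      AEStronglyMeasurable f (volume.restrict (Set.uIoc (x-ε) (x+ε))) →
      (∀ y ∈ Set.uIoc (x-ε) (x+ε), |f y| ≤ Cb) →
      IntervalIntegrable f volume (x-ε) (x+ε) := by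
    intro f Cb hm hb
    rw [intervalIntegrable_iff]
    have hfin : IsFiniteMeasure (volume.restrict (Set.uIoc (x-ε) (x+ε))) := by
      rw [hIoc]
      exact ⟨by rw [Measure.restrict_apply_univ]; exact measure_Ioc_lt_top⟩
    have hct : Integrable (fun _ : ℝ => Cb) (volume.restrict (Set.uIoc (x-ε) (x+ε))) :=
      integrable_const Cb
    refine hct.mono' hm ?_
    filter_upwards [ae_restrict_mem measurableSet_uIoc] with y hy
    exact hb y hy
  have hm1 : Measurable (fun y : ℝ => (u y - u x) / (y - x)^2) :=
    ((hu.continuous.sub continuous_const).measurable).div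
      ((measurable_id.sub_const x).pow_const 2)
  have hFeqΦm : ∀ y : ℝ, F y = Φ y * ((u y - u x)/(y - x)^2) := by
    intro y
    simp only [hF, hΦ]
    by_cases hy : y = x
    · subst hy; simp
    · rw [← hdiv y hy (u y - u x)]
      ring
  have hPhiF : IntervalIntegrable Φ volume (x-ε) (x+ε) →
      IntervalIntegrable F volume (x-ε) (x+ε) := by
    intro hPhi
    obtain ⟨z₀, hz₀mem, hz₀⟩ := (isCompact_Icc (a := x-ε) (b := x+ε)).exists_isMaxOn
      ⟨x, by constructor <;> linarith⟩
      ((continuous_abs.comp (hu.continuous_iteratedDeriv 1 (by norm_num))).continuousOn)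
    set L := |iteratedDeriv 1 u z₀| with hLdef
    have hL0 : 0 ≤ L := abs_nonneg _
    have hlip : ∀ y ∈ Set.Icc (x-ε) (x+ε), |u y - u x| ≤ L * |y - x| := by
      intro y hy
      have hd : ∀ z ∈ Set.Icc (x-ε) (x+ε), DifferentiableAt ℝ u z := fun z _ =>
        (hu.differentiable (by norm_num)).differentiableAt
      have hbd : ∀ z ∈ Set.Icc (x-ε) (x+ε), ‖deriv u z‖ ≤ L := by
        intro z hz
        have h1 := hz₀ hz
        rw [Real.norm_eq_abs, ← iteratedDeriv_one]
        exact h1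
      have hx : x ∈ Set.Icc (x-ε) (x+ε) := ⟨by linarith, by linarith⟩
      have := Convex.norm_image_sub_le_of_norm_deriv_le hd hbd (convex_Icc _ _) hx hy
      simpa [Real.norm_eq_abs] using this
    have hΦm : AEStronglyMeasurable Φ (volume.restrict (Set.uIoc (x-ε) (x+ε))) :=
      (intervalIntegrable_iff.1 hPhi).aestronglyMeasurable
    have hFm : AEStronglyMeasurable F (volume.restrict (Set.uIoc (x-ε) (x+ε))) :=
      (hΦm.mul hm1.aestronglyMeasurable).congr (ae_of_all _ fun y => (hFeqΦm y).symm)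
    refine hii F (M * f'0 * L) hFm ?_
    intro y hy
    have h1 : abs ((u y - u x) / |y - x|) ≤ L := by
      by_cases hyx : y = x
      · subst hyx; simpa using hL0
      · have h0 : (0:ℝ) < |y - x| := abs_pos.2 (sub_ne_zero.2 hyx)
        rw [abs_div, abs_abs, div_le_iff₀ h0]
        refine hlip y ?_
        rw [hIoc] at hy
        exact ⟨hy.1.le, hy.2⟩
    calc |F y| = J (|y-x|/ε) * f'0 * abs ((u y - u x)/|y-x|) := by
          simp only [hF]
          rw [abs_mul, abs_mul, abs_of_nonneg (hJ0 _), abs_of_nonneg hf'0.le]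
      _ ≤ M * f'0 * L := by
          apply mul_le_mul (mul_le_mul (hJM _) le_rfl hf'0.le hM0) h1 (abs_nonneg _)
            (by positivity)
  by_cases hPhi : IntervalIntegrable Φ volume (x-ε) (x+ε)
  · -- Φ integrable: the main estimate
    have hFint := hPhiF hPhi
    have hFrint : IntervalIntegrable (fun y => F (2*x - y)) volume (x-ε) (x+ε) := by
      have key := hFint.comp_sub_left (2*x)
      rw [show 2*x - (x-ε) = x+ε by ring, show 2*x - (x+ε) = x-ε by ring] at key
      exact key.symm
    have hGint := hFint.add hFrint
    have hPc : IntervalIntegrable (fun y => Φ y * c) volume (x-ε) (x+ε) := hPhi.mul_const c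
    have hEint : IntervalIntegrable (fun y => (F y + F (2*x - y)) - Φ y * c) volume
        (x-ε) (x+ε) := hGint.sub hPc
    have hEpt : ∀ y : ℝ, |(F y + F (2*x - y)) - Φ y * c| ≤ M * f'0 * (2*C₁*|y-x|^3) := by
      intro y
      have hEeq : (F y + F (2*x - y)) - Φ y * c
          = J (|y-x|/ε) * f'0 * ((Hf y - c*(y-x)^2)/|y-x|) := by
        rw [hG y]
        simp only [hΦ]
        by_cases hyx : y = x
        · subst hyx; simp [hHf]
        · have h0 : |y - x| ≠ 0 := abs_ne_zero.2 (sub_ne_zero.2 hyx)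
          have key : (Hf y - c*(y-x)^2)/|y-x| = Hf y/|y-x| - c*|y-x| := by
            rw [sub_div]
            congr 1
            rw [div_eq_iff h0, he2 y]
            ring
          rw [key]
          ring
      rw [hEeq]
      by_cases hyx : y = x
      · subst hyx
        simp only [hHf]
        norm_num
      · have h0 : (0:ℝ) < |y - x| := abs_pos.2 (sub_ne_zero.2 hyx)
        calc |J (|y-x|/ε) * f'0 * ((Hf y - c*(y-x)^2)/|y-x|)|
            = J (|y-x|/ε) * f'0 * (|Hf y - c*(y-x)^2|/|y-x|) := by
              rw [abs_mul, abs_mul, abs_div, abs_abs, abs_of_nonneg (hJ0 _),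
                abs_of_nonneg hf'0.le]
          _ ≤ M * f'0 * ((2*C₁*(y-x)^4)/|y-x|) := by
              gcongr
              · exact hJM _
              · exact hTay y
          _ = M * f'0 * (2*C₁*|y-x|^3) := by
              have hq : (2*C₁*(y-x)^4) / |y-x| = 2*C₁*|y-x|^3 := by
                rw [he4 y, div_eq_iff h0.ne']
                ring
              rw [hq]
    have hEbd : ∀ y ∈ Set.uIoc (x-ε) (x+ε),
        ‖(F y + F (2*x - y)) - Φ y * c‖ ≤ M * f'0 * (2*C₁*ε^3) := by
      intro y hy
      have h1 := hEpt y
      have h2 := hmemI y hy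
      have h3 : |y-x|^3 ≤ ε^3 := pow_le_pow_left₀ (abs_nonneg _) h2 3
      rw [Real.norm_eq_abs]
      have h5 : 2*C₁*|y-x|^3 ≤ 2*C₁*ε^3 := mul_le_mul_of_nonneg_left h3 (by linarith)
      have h7 := mul_le_mul_of_nonneg_left h5 (mul_nonneg hM0 hf'0.le)
      linarith
    have hEbnd := intervalIntegral.norm_integral_le_of_norm_le_const hEbd
    rw [show x + ε - (x - ε) = 2*ε by ring] at hEbnd
    have hIntE : (∫ y in (x-ε)..(x+ε), ((F y + F (2*x - y)) - Φ y * c))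
        = 2 * (∫ y in (x-ε)..(x+ε), F y) - ε^2 * Fq * c := by
      rw [intervalIntegral.integral_sub hGint hPc,
        intervalIntegral.integral_add hFint hFrint, hrefl,
        intervalIntegral.integral_mul_const, hscale]
      ring
    have hgoal_eq : (2/ε^2) * (∫ y in (x-ε)..(x+ε), F y) - Fq * c
        = (∫ y in (x-ε)..(x+ε), ((F y + F (2*x - y)) - Φ y * c)) / ε^2 := by
      rw [hIntE]
      field_simp
      try ring
    rw [hgoal_eq, abs_div, abs_of_pos hε2, div_le_iff₀ hε2]
    have h2ε : |2*ε| = 2*ε := abs_of_pos (by linarith)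
    rw [Real.norm_eq_abs, h2ε] at hEbnd
    have h9 : (0:ℝ) < ε^4 := by positivity
    have h10 : (0:ℝ) ≤ M*f'0*C₁*ε^4 :=
      mul_nonneg (mul_nonneg (mul_nonneg hM0 hf'0.le) hC₁0) h9.le
    linarith [hEbnd, h10, h9.le]
  · -- Φ not integrable: Fq = 0
    have hFq0 : Fq = 0 := by
      have h1 := hscale
      rw [intervalIntegral.integral_undef hPhi] at h1
      have := (mul_eq_zero.1 h1.symm)
      rcases this with h | h
      · exact absurd h (ne_of_gt hε2)
      · exact h
    by_cases hF2 : IntervalIntegrable F volume (x-ε) (x+ε)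
    · have hFrint : IntervalIntegrable (fun y => F (2*x - y)) volume (x-ε) (x+ε) := by
        have key := hF2.comp_sub_left (2*x)
        rw [show 2*x - (x-ε) = x+ε by ring, show 2*x - (x+ε) = x-ε by ring] at key
        exact key.symm
      have hGint := hF2.add hFrint
      have hcc : |c| ≤ 2*C₁*ε^2 := by
        by_contra hcon
        push_neg at hcon
        apply hPhi
        have hHne : ∀ y, y ≠ x → |y - x| ≤ ε → Hf y ≠ 0 := by
          intro y hyx hyε h0
          have h1 := hTay y
          rw [h0, zero_sub, abs_neg] at h1
          have h3 : (0:ℝ) < (y-x)^2 := by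
            have hne := sub_ne_zero.2 hyx
            positivity
          have h4 : (y-x)^2 ≤ ε^2 := by
            rw [he2 y]
            apply pow_le_pow_left₀ (abs_nonneg _) hyε
          have h5 : |c*(y-x)^2| = |c| * (y-x)^2 := by rw [abs_mul, abs_pow, sq_abs]
          rw [h5] at h1
          have h6 := mul_le_mul_of_nonneg_right h4 h3.le
          have h7 := mul_le_mul_of_nonneg_left h6 (by linarith : (0:ℝ) ≤ 2*C₁)
          have h8 := mul_lt_mul_of_pos_right hcon h3
          linarith
        have hρm : Measurable (fun y : ℝ => (y-x)^2 / Hf y) := by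
          apply Measurable.div ((measurable_id.sub_const x).pow_const 2)
          have : Continuous Hf := by
            simp only [hHf]
            exact (hu.continuous.add (hu.continuous.comp
              (continuous_const.sub continuous_id))).sub continuous_const
          exact this.measurable
        have hGm : AEStronglyMeasurable (fun y => F y + F (2*x - y))
            (volume.restrict (Set.uIoc (x-ε) (x+ε))) :=
          (intervalIntegrable_iff.1 hGint).aestronglyMeasurable
        have hΦm : AEStronglyMeasurable Φ (volume.restrict (Set.uIoc (x-ε) (x+ε))) := by
          refine (hGm.mul hρm.aestronglyMeasurable).congr ?_
          filter_upwards [ae_restrict_mem measurableSet_uIoc] with y hy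
          by_cases hyx : y = x
          · subst hyx
            simp [hF, hΦ]
          · have hH0 := hHne y hyx (hmemI y hy)
            have h0 : |y - x| ≠ 0 := abs_ne_zero.2 (sub_ne_zero.2 hyx)
            show (F y + F (2*x - y)) * ((y-x)^2 / Hf y) = Φ y
            rw [hG y]
            simp only [hΦ]
            have key : Hf y/|y-x| * ((y-x)^2/Hf y) = |y-x| := by
              rw [div_mul_div_comm, div_eq_iff (mul_ne_zero h0 hH0), he2 y]
              ring
            rw [mul_assoc, key]
        refine hii Φ (M * f'0 * ε) hΦm ?_
        intro y hy
        have h2 := hmemI y hy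
        simp only [hΦ]
        rw [abs_mul, abs_mul, abs_abs, abs_of_nonneg (hJ0 _), abs_of_nonneg hf'0.le]
        apply mul_le_mul (mul_le_mul (hJM _) le_rfl hf'0.le hM0) h2 (abs_nonneg _)
          (by positivity)
      have hGbnd : ∀ y ∈ Set.uIoc (x-ε) (x+ε),
          ‖F y + F (2*x - y)‖ ≤ M * f'0 * (4*C₁*ε^3) := by
        intro y hy
        have h1 := hGbd y
        have h2 := hmemI y hy
        have h3 : |y-x|^3 ≤ ε^3 := pow_le_pow_left₀ (abs_nonneg _) h2 3
        rw [Real.norm_eq_abs]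
        have hpos : (0:ℝ) ≤ 2*C₁*ε^2 := mul_nonneg (by linarith) (sq_nonneg ε)
        have h4 : |c| * |y-x| ≤ 2*C₁*ε^2 * ε := mul_le_mul hcc h2 (abs_nonneg _) hpos
        have h5 : 2*C₁*|y-x|^3 ≤ 2*C₁*ε^3 := mul_le_mul_of_nonneg_left h3 (by linarith)
        have h6 : |c| * |y-x| + 2*C₁*|y-x|^3 ≤ 4*C₁*ε^3 := by linarith
        have h7 := mul_le_mul_of_nonneg_left h6 (mul_nonneg hM0 hf'0.le)
        linarith
      have hGbnd2 := intervalIntegral.norm_integral_le_of_norm_le_const hGbnd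
      rw [show x + ε - (x - ε) = 2*ε by ring] at hGbnd2
      have h2F : (∫ y in (x-ε)..(x+ε), (F y + F (2*x - y)))
          = 2 * ∫ y in (x-ε)..(x+ε), F y := by
        rw [intervalIntegral.integral_add hF2 hFrint, hrefl]
        ring
      rw [hFq0]
      have hgoal_eq : (2/ε^2) * (∫ y in (x-ε)..(x+ε), F y) - 0 * c
          = (∫ y in (x-ε)..(x+ε), (F y + F (2*x - y))) / ε^2 := by
        rw [h2F]
        field_simp
        ring
      rw [hgoal_eq, abs_div, abs_of_pos hε2, div_le_iff₀ hε2]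
      have h2ε : |2*ε| = 2*ε := abs_of_pos (by linarith)
      rw [Real.norm_eq_abs, h2ε] at hGbnd2
      have h9 : (0:ℝ) < ε^4 := by positivity
      have h10 : (0:ℝ) ≤ M*f'0*C₁*ε^4 :=
        mul_nonneg (mul_nonneg (mul_nonneg hM0 hf'0.le) hC₁0) h9.le
      linarith [hGbnd2, h10, h9.le]
    · rw [intervalIntegral.integral_undef hF2, hFq0]
      simp only [mul_zero, zero_mul, sub_zero, abs_zero]
      positivity
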